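/- Under the hypotheses of the interference-alignment setup (Γ_1, Γ_2, Γ_3 as above with colspace(Γ_1) ⊆ colspace([Γ_2 | Γ_3]) and the block structure (i),(ii)), the first block-row of Γ_3 (an α×α matrix) must be invertible, i.e., the desired components of the α parity-node repair vectors are linearly independent. -/

import Mathlib

/-- In the interference-alignment setup, the desired (first) block of `Γ₃`
must be invertible. -/
theorem desired_component_invertible
    {F : Type*} [Field F] [Fintype F] {k α : ℕ} (hk : 0 < k)
    (Γ₁ : Matrix (Fin k × Fin α) (Fin α) F)
    (Γ₂ : Matrix (Fin k × Fin α) (Fin (k - 1)) F)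
    (Γ₃ : Matrix (Fin k × Fin α) (Fin α) F)
    (h1 : ∀ i a j, Γ₁ (i, a) j = if i = (⟨0, hk⟩ : Fin k) ∧ a = j then 1 else 0)
    (h2 : ∀ a j, Γ₂ ((⟨0, hk⟩ : Fin k), a) j = 0)
    (h3 : Submodule.span F (Set.range fun j => fun i => Γ₁ i j) ≤
          Submodule.span F (Set.range fun j => fun i => (Matrix.fromCols Γ₂ Γ₃) i j)) :
    IsUnit (Matrix.of (fun a j => Γ₃ ((⟨0, hk⟩ : Fin k), a) j) :
      Matrix (Fin α) (Fin α) F) := by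
  set M : Matrix (Fin α) (Fin α) F :=
    Matrix.of (fun a j => Γ₃ ((⟨0, hk⟩ : Fin k), a) j) with hM
  -- projection to the first block row
  set π : ((Fin k × Fin α) → F) →ₗ[F] (Fin α → F) :=
    LinearMap.funLeft F F (fun a => ((⟨0, hk⟩ : Fin k), a)) with hπ
  rw [← Matrix.mulVec_surjective_iff_isUnit]
  have hrange : ∀ j : Fin α, Pi.single j (1 : F) ∈ LinearMap.range M.mulVecLin := by
    intro j
    rw [Matrix.range_mulVecLin]
    -- the j-th column of Γ₁ is in the span of columns of [Γ₂ | Γ₃]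
    have hcol : (fun i => Γ₁ i j) ∈
        Submodule.span F (Set.range fun j => fun i => (Matrix.fromCols Γ₂ Γ₃) i j) :=
      h3 (Submodule.subset_span ⟨j, rfl⟩)
    have hmap : π (fun i => Γ₁ i j) ∈
        Submodule.span F (π '' (Set.range fun j => fun i => (Matrix.fromCols Γ₂ Γ₃) i j)) := by
      rw [← Submodule.map_span]
      exact Submodule.mem_map_of_mem hcol
    have h1' : π (fun i => Γ₁ i j) = Pi.single j (1 : F) := by
      funext a
      simp only [hπ, LinearMap.funLeft_apply, Function.comp]
      rw [h1, Pi.single_apply]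
      simp [eq_comm]
    rw [h1'] at hmap
    refine Submodule.span_le.mpr ?_ hmap
    rintro _ ⟨_, ⟨c, rfl⟩, rfl⟩
    rcases c with c | c
    · -- column of Γ₂ projects to 0
      have : π (fun i => Matrix.fromCols Γ₂ Γ₃ i (Sum.inl c)) = 0 := by
        funext a
        simp [hπ, Matrix.fromCols, h2]
      rw [this]; exact Submodule.zero_mem _
    · -- column of Γ₃ projects to a column of M
      have : π (fun i => Matrix.fromCols Γ₂ Γ₃ i (Sum.inr c)) = M.transpose c := by
        funext a
        simp [hπ, hM, Matrix.fromCols, Matrix.transpose]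
      rw [this]
      exact Submodule.subset_span ⟨c, rfl⟩
  have htop : LinearMap.range M.mulVecLin = ⊤ := by
    rw [eq_top_iff, ← (Pi.basisFun F (Fin α)).span_eq, Submodule.span_le]
    rintro _ ⟨j, rfl⟩
    simpa [Pi.basisFun_apply] using hrange j
  intro v
  obtain ⟨w, hw⟩ := LinearMap.range_eq_top.mp htop v
  exact ⟨w, hw⟩
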